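/- Let B be a symmetric positive definite n×n real matrix, let v, r ∈ ℝⁿ, and let δ > 0 be such that the corrected gradient variation r̃ := r − δv satisfies vᵀr̃ > 0. Let B₊ := B + (r̃ r̃ᵀ)/(vᵀ r̃) − (B v vᵀ B)/(vᵀ B v) + δI be the regularized BFGS update. Then B₊ solves the regularized semidefinite program: for every symmetric n×n matrix Z satisfying the secant constraint Z v = r and such that Z − δI is positive definite, one has tr(B⁻¹(Z − δI)) − log det(B⁻¹(Z − δI)) ≥ tr(B⁻¹(B₊ − δI)) − log det(B⁻¹(B₊ − δI)). -/

import Mathlib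

open Matrix

variable {n : ℕ}

lemma mul_vecMulVec' (M : Matrix (Fin n) (Fin n) ℝ) (a b : Fin n → ℝ) :
    M * vecMulVec a b = vecMulVec (M *ᵥ a) b := by
  ext i j
  simp [Matrix.mul_apply, vecMulVec_apply, mulVec, dotProduct, Finset.sum_mul, mul_assoc]

lemma vecMulVec_mul' (M : Matrix (Fin n) (Fin n) ℝ) (a b : Fin n → ℝ) :
    vecMulVec a b * M = vecMulVec a (Mᵀ *ᵥ b) := by
  ext i j
  simp [Matrix.mul_apply, vecMulVec_apply, mulVec, dotProduct, Finset.mul_sum, mul_comm, mul_left_comm]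

lemma trace_vecMulVec' (a b : Fin n → ℝ) :
    (vecMulVec a b).trace = a ⬝ᵥ b := by
  simp [Matrix.trace, Matrix.diag, vecMulVec_apply, dotProduct]

lemma vecMulVec_mulVec' (a b c : Fin n → ℝ) :
    vecMulVec a b *ᵥ c = (b ⬝ᵥ c) • a := by
  ext i
  simp [vecMulVec_apply, mulVec, dotProduct, Finset.mul_sum, mul_comm, mul_left_comm, Finset.sum_mul]

lemma isSymm_vecMulVec (a : Fin n → ℝ) : (vecMulVec a a).IsSymm := by
  ext i j; simp [Matrix.IsSymm, vecMulVec_apply, mul_comm]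

lemma trace_eq_sum_eigenvalues {A : Matrix (Fin n) (Fin n) ℝ} (hA : A.IsHermitian) :
    A.trace = ∑ i, hA.eigenvalues i := by
  conv_lhs => rw [hA.spectral_theorem, Unitary.conjStarAlgAut_apply]
  rw [trace_mul_cycle]
  rw [(Matrix.mem_unitaryGroup_iff').mp (hA.eigenvectorUnitary).2, one_mul]
  simp [Matrix.trace_diagonal]

open scoped MatrixOrder in
lemma key_ineq {P Q : Matrix (Fin n) (Fin n) ℝ} (hP : P.PosDef) (hQ : Q.PosDef) :
    (n : ℝ) ≤ (P⁻¹ * Q).trace - Real.log (P⁻¹ * Q).det := by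
  have hPinv : P⁻¹.PosDef := hP.inv
  set R := CFC.sqrt P⁻¹ with hRdef
  have hRR : R * R = P⁻¹ := CFC.sqrt_mul_sqrt_self _ hPinv.posSemidef.nonneg
  have hRh : R.IsHermitian := (CFC.sqrt_nonneg P⁻¹).posSemidef.1
  have hRsymm : Rᵀ = R := by
    rw [← Matrix.conjTranspose_eq_transpose_of_trivial]; exact hRh
  set M := R * Q * R with hM
  have hMh : M.IsHermitian := by
    have := Matrix.isHermitian_conjTranspose_mul_mul R hQ.1
    rwa [hRh.eq] at this
  have hMpd : M.PosDef := by
    refine Matrix.PosDef.of_dotProduct_mulVec_pos hMh (fun x hx => ?_)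
    have hRx : R *ᵥ x ≠ 0 := by
      intro h
      apply hx
      have h1 : P⁻¹ *ᵥ x = 0 := by
        rw [← hRR, ← Matrix.mulVec_mulVec, h, Matrix.mulVec_zero]
      have h2 : (P * P⁻¹) *ᵥ x = 0 := by
        rw [← Matrix.mulVec_mulVec, h1, Matrix.mulVec_zero]
      rwa [Matrix.mul_nonsing_inv _ hP.det_pos.ne'.isUnit, Matrix.one_mulVec] at h2
    have hpos := hQ.dotProduct_mulVec_pos hRx
    simp only [star_trivial] at hpos ⊢
    have heq : x ⬝ᵥ M *ᵥ x = (R *ᵥ x) ⬝ᵥ Q *ᵥ (R *ᵥ x) := by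
      rw [hM, Matrix.mul_assoc, ← Matrix.mulVec_mulVec, Matrix.dotProduct_mulVec x R,
        ← Matrix.mulVec_transpose, hRsymm, ← Matrix.mulVec_mulVec]
    rw [heq]; exact hpos
  -- trace and det transfer
  have htr : (P⁻¹ * Q).trace = M.trace := by
    rw [← hRR, hM, Matrix.mul_assoc, Matrix.trace_mul_comm, Matrix.mul_assoc]
  have hdet : (P⁻¹ * Q).det = M.det := by
    rw [← hRR, hM]
    simp only [Matrix.det_mul]
    ring
  rw [htr, hdet, trace_eq_sum_eigenvalues hMh, hMh.det_eq_prod_eigenvalues]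
  have hpos : ∀ i, 0 < hMh.eigenvalues i := fun i => hMpd.eigenvalues_pos i
  have hlog : Real.log (∏ i, (hMh.eigenvalues i : ℝ)) = ∑ i, Real.log (hMh.eigenvalues i) :=
    Real.log_prod (fun i _ => (hpos i).ne')
  simp only [RCLike.ofReal_real_eq_id, id_eq, Function.comp]
  rw [hlog]
  have h1 : ∀ i : Fin n, Real.log (hMh.eigenvalues i) ≤ hMh.eigenvalues i - 1 :=
    fun i => Real.log_le_sub_one_of_pos (hpos i)
  calc (n : ℝ) = ∑ _i : Fin n, (1 : ℝ) := by simp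
  _ ≤ ∑ i, (hMh.eigenvalues i - Real.log (hMh.eigenvalues i)) := by
      apply Finset.sum_le_sum
      intro i _
      have := h1 i
      linarith
  _ = ∑ i, hMh.eigenvalues i - ∑ i, Real.log (hMh.eigenvalues i) := by
      rw [Finset.sum_sub_distrib]



/-- **Lemma 1: the regularized BFGS update solves the regularized semidefinite program.**
For a symmetric positive definite matrix `B`, vectors `v, r`, and `δ > 0` with
`vᵀ(r - δv) > 0`, the regularized BFGS update
`B₊ = B + (r̃r̃ᵀ)/(vᵀr̃) - (BvvᵀB)/(vᵀBv) + δI` (where `r̃ = r - δv`)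
minimizes `tr(B⁻¹(Z - δI)) - log det(B⁻¹(Z - δI))` among all symmetric matrices `Z`
satisfying the secant condition `Zv = r` and with `Z - δI` positive definite. -/
theorem regularized_bfgs_update_optimal {n : ℕ}
    (B : Matrix (Fin n) (Fin n) ℝ) (hB : B.PosDef)
    (v r : Fin n → ℝ) (δ : ℝ) (hδ : 0 < δ)
    (hcurv : 0 < v ⬝ᵥ (r - δ • v))
    (Bp : Matrix (Fin n) (Fin n) ℝ)
    (hBp : Bp = B + (v ⬝ᵥ (r - δ • v))⁻¹ • vecMulVec (r - δ • v) (r - δ • v)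
        - (v ⬝ᵥ B *ᵥ v)⁻¹ • vecMulVec (B *ᵥ v) (B *ᵥ v)
        + δ • (1 : Matrix (Fin n) (Fin n) ℝ)) :
    ∀ Z : Matrix (Fin n) (Fin n) ℝ, Z.IsSymm → Z *ᵥ v = r →
      (Z - δ • (1 : Matrix (Fin n) (Fin n) ℝ)).PosDef →
      (B⁻¹ * (Bp - δ • (1 : Matrix (Fin n) (Fin n) ℝ))).trace
          - Real.log (B⁻¹ * (Bp - δ • (1 : Matrix (Fin n) (Fin n) ℝ))).det
        ≤ (B⁻¹ * (Z - δ • (1 : Matrix (Fin n) (Fin n) ℝ))).trace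
          - Real.log (B⁻¹ * (Z - δ • (1 : Matrix (Fin n) (Fin n) ℝ))).det := by
  intro Z hZs hZv hXpd
  set rt : Fin n → ℝ := r - δ • v with hrt
  set k : ℝ := v ⬝ᵥ rt with hk
  set a : Fin n → ℝ := B *ᵥ v with ha
  set m : ℝ := v ⬝ᵥ a with hm
  set W : Matrix (Fin n) (Fin n) ℝ :=
    B + k⁻¹ • vecMulVec rt rt - m⁻¹ • vecMulVec a a with hW
  have hv : v ≠ 0 := by
    rintro rfl; rw [hk] at hcurv; simp at hcurv
  have hm0 : 0 < m := by
    have := hB.dotProduct_mulVec_pos hv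
    simpa [hm, ha] using this
  have hBsymm : Bᵀ = B := by
    rw [← Matrix.conjTranspose_eq_transpose_of_trivial]; exact hB.1
  -- W *ᵥ v = rt
  have hav : a ⬝ᵥ v = m := by rw [hm, dotProduct_comm]
  have hrtv : rt ⬝ᵥ v = k := by rw [hk, dotProduct_comm]
  have hWv : W *ᵥ v = rt := by
    rw [hW, Matrix.sub_mulVec, Matrix.add_mulVec, Matrix.smul_mulVec,
      Matrix.smul_mulVec, vecMulVec_mulVec', vecMulVec_mulVec', hrtv, hav,
      smul_smul, smul_smul, inv_mul_cancel₀ hcurv.ne', inv_mul_cancel₀ hm0.ne', one_smul, one_smul]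
    rw [← ha]; abel
  -- symmetry of W
  have hWsymm : Wᵀ = W := by
    rw [hW, Matrix.transpose_sub, Matrix.transpose_add, Matrix.transpose_smul,
      Matrix.transpose_smul, hBsymm, (isSymm_vecMulVec rt), (isSymm_vecMulVec a)]
  have hWherm : W.IsHermitian := by
    rw [Matrix.IsHermitian, Matrix.conjTranspose_eq_transpose_of_trivial, hWsymm]
  -- positive definiteness of W
  have hWpd : W.PosDef := by
    refine Matrix.PosDef.of_dotProduct_mulVec_pos hWherm (fun x hx => ?_)
    simp only [star_trivial]
    have hxW : x ⬝ᵥ W *ᵥ x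
        = x ⬝ᵥ B *ᵥ x + k⁻¹ * ((rt ⬝ᵥ x) * (x ⬝ᵥ rt)) - m⁻¹ * ((a ⬝ᵥ x) * (x ⬝ᵥ a)) := by
      rw [hW, Matrix.sub_mulVec, Matrix.add_mulVec, Matrix.smul_mulVec,
        Matrix.smul_mulVec, vecMulVec_mulVec', vecMulVec_mulVec',
        dotProduct_sub, dotProduct_add, dotProduct_smul, dotProduct_smul]
      simp [smul_eq_mul, mul_comm, mul_assoc, mul_left_comm]
    set c : ℝ := (x ⬝ᵥ a) / m with hc
    set y : Fin n → ℝ := x - c • v with hy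
    have hvBx : v ⬝ᵥ B *ᵥ x = x ⬝ᵥ a := by
      rw [Matrix.dotProduct_mulVec, ← Matrix.mulVec_transpose, hBsymm, ← ha, dotProduct_comm]
    have hyBy : y ⬝ᵥ B *ᵥ y = x ⬝ᵥ B *ᵥ x - 2 * c * (x ⬝ᵥ a) + c * c * m := by
      rw [hy, Matrix.mulVec_sub, Matrix.mulVec_smul]
      rw [sub_dotProduct, dotProduct_sub, dotProduct_sub, smul_dotProduct,
        dotProduct_smul, smul_dotProduct, dotProduct_smul, hvBx]
      have : x ⬝ᵥ B *ᵥ v = x ⬝ᵥ a := by rw [ha]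
      rw [this]
      have : v ⬝ᵥ B *ᵥ v = m := by rw [hm, ha]
      rw [this]
      simp [smul_eq_mul]; ring
    have hyBy' : y ⬝ᵥ B *ᵥ y = x ⬝ᵥ B *ᵥ x - m⁻¹ * ((a ⬝ᵥ x) * (x ⬝ᵥ a)) := by
      rw [hyBy, hc, dotProduct_comm a x]
      field_simp
      ring
    have hrtx : (0:ℝ) ≤ k⁻¹ * ((rt ⬝ᵥ x) * (x ⬝ᵥ rt)) := by
      rw [dotProduct_comm x rt]
      exact mul_nonneg (inv_pos.mpr hcurv).le (mul_self_nonneg _)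
    by_cases hy0 : y = 0
    · -- x = c • v with c ≠ 0
      have hxc : x = c • v := by
        have := sub_eq_zero.mp hy0
        exact this
      have hc0 : c ≠ 0 := fun h => hx (by rw [hxc, h, zero_smul])
      have h1 : rt ⬝ᵥ x = c * k := by
        rw [hxc, dotProduct_smul, smul_eq_mul, ← hrtv, dotProduct_comm]
      have h2 : x ⬝ᵥ rt = c * k := by rw [dotProduct_comm]; exact h1
      have hyBy0 : y ⬝ᵥ B *ᵥ y = 0 := by rw [hy0]; simp
      have : x ⬝ᵥ B *ᵥ x - m⁻¹ * ((a ⬝ᵥ x) * (x ⬝ᵥ a)) = 0 := by rw [← hyBy']; exact hyBy0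
      rw [hxW, h1, h2]
      have hk2 : k⁻¹ * (c * k * (c * k)) = c * c * k := by
        field_simp
      have hcc : 0 < c * c := mul_self_pos.mpr hc0
      have := mul_pos hcc hcurv
      linarith
    · have hyBypos : 0 < y ⬝ᵥ B *ᵥ y := by
        have := hB.dotProduct_mulVec_pos hy0
        simpa using this
      rw [hxW]
      linarith [hyBy', hrtx]
  set X : Matrix (Fin n) (Fin n) ℝ := Z - δ • (1 : Matrix (Fin n) (Fin n) ℝ) with hXdef
  -- basic determinant facts
  have hdB : B.det ≠ 0 := hB.det_pos.ne'
  have hdW : W.det ≠ 0 := hWpd.det_pos.ne'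
  have hdX : X.det ≠ 0 := hXpd.det_pos.ne'
  have hBinv : B * B⁻¹ = 1 := Matrix.mul_nonsing_inv _ hdB.isUnit
  have hBinv' : B⁻¹ * B = 1 := Matrix.nonsing_inv_mul _ hdB.isUnit
  have hWinv' : W⁻¹ * W = 1 := Matrix.nonsing_inv_mul _ hdW.isUnit
  have hBpW : Bp - δ • (1 : Matrix (Fin n) (Fin n) ℝ) = W := by
    rw [hBp, hW]; abel
  have hXv : X *ᵥ v = rt := by
    rw [hXdef, Matrix.sub_mulVec, hZv, Matrix.smul_mulVec, Matrix.one_mulVec, hrt]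
  have hXsymm : Xᵀ = X := by
    rw [hXdef, Matrix.transpose_sub, Matrix.transpose_smul, Matrix.transpose_one, hZs]
  have hWirt : W⁻¹ *ᵥ rt = v := by
    rw [← hWv, Matrix.mulVec_mulVec, hWinv', Matrix.one_mulVec]
  have hBiT : B⁻¹ᵀ = B⁻¹ := by rw [Matrix.transpose_nonsing_inv, hBsymm]
  set S : Matrix (Fin n) (Fin n) ℝ := X - W with hS
  have hSv : S *ᵥ v = 0 := by rw [hS, Matrix.sub_mulVec, hXv, hWv, sub_self]
  have hSsymm : Sᵀ = S := by rw [hS, Matrix.transpose_sub, hXsymm, hWsymm]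
  have hBia : B⁻¹ *ᵥ a = v := by rw [ha, Matrix.mulVec_mulVec, hBinv', Matrix.one_mulVec]
  clear_value rt k a m W X S
  -- the two rank-one traces vanish
  have htr1 : ∀ u : Fin n → ℝ, (vecMulVec v u * S).trace = 0 := by
    intro u
    rw [Matrix.trace_mul_comm, mul_vecMulVec', hSv, trace_vecMulVec', zero_dotProduct]
  have htr2 : ∀ w : Fin n → ℝ, (vecMulVec w v * S).trace = 0 := by
    intro w
    rw [Matrix.trace_mul_comm, mul_vecMulVec', trace_vecMulVec', dotProduct_comm,
      Matrix.dotProduct_mulVec, ← Matrix.mulVec_transpose, hSsymm, hSv, zero_dotProduct]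
  -- trace identity
  have hid : B⁻¹ - W⁻¹ = W⁻¹ * (W - B) * B⁻¹ := by
    rw [Matrix.mul_sub, hWinv', Matrix.sub_mul, one_mul, Matrix.mul_assoc, hBinv, mul_one]
  have hWB : W - B = k⁻¹ • vecMulVec rt rt - m⁻¹ • vecMulVec a a := by
    rw [hW]; abel
  have hmat : W⁻¹ * (k⁻¹ • vecMulVec rt rt - m⁻¹ • vecMulVec a a) * B⁻¹
      = k⁻¹ • vecMulVec v (B⁻¹ *ᵥ rt) - m⁻¹ • vecMulVec (W⁻¹ *ᵥ a) v := by
    rw [Matrix.mul_sub, Matrix.mul_smul, Matrix.mul_smul, mul_vecMulVec', mul_vecMulVec',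
      hWirt, Matrix.sub_mul, Matrix.smul_mul, Matrix.smul_mul, vecMulVec_mul', vecMulVec_mul',
      hBiT, hBia]
  have ht3 : ((B⁻¹ - W⁻¹) * S).trace = 0 := by
    rw [hid, hWB, hmat]
    simp only [Matrix.sub_mul, Matrix.smul_mul, Matrix.trace_sub, Matrix.trace_smul,
      htr1, htr2, smul_zero, sub_self]
  have etr : (B⁻¹ * X).trace - (B⁻¹ * W).trace = (W⁻¹ * X).trace - n := by
    have l1 : (B⁻¹ * X).trace - (B⁻¹ * W).trace = (B⁻¹ * S).trace := by
      rw [hS, Matrix.mul_sub, Matrix.trace_sub]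
    have l2 : (W⁻¹ * X).trace - (n : ℝ) = (W⁻¹ * S).trace := by
      rw [hS, Matrix.mul_sub, Matrix.trace_sub]
      congr 1
      rw [hWinv', Matrix.trace_one]
      simp
    have l3 : (B⁻¹ * S).trace = (W⁻¹ * S).trace := by
      have : ((B⁻¹ - W⁻¹) * S).trace = (B⁻¹ * S).trace - (W⁻¹ * S).trace := by
        rw [Matrix.sub_mul, Matrix.trace_sub]
      rw [this] at ht3
      linarith
    rw [l1, l2, l3]
  -- determinant/log identities
  have hdBi : B⁻¹.det ≠ 0 := by
    rw [Matrix.det_nonsing_inv, Ring.inverse_eq_inv]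
    exact inv_ne_zero hdB
  have hdWi : W⁻¹.det ≠ 0 := by
    rw [Matrix.det_nonsing_inv, Ring.inverse_eq_inv]
    exact inv_ne_zero hdW
  have e2 : Real.log (B⁻¹ * X).det = Real.log B⁻¹.det + Real.log X.det := by
    rw [Matrix.det_mul, Real.log_mul hdBi hdX]
  have e3 : Real.log (B⁻¹ * W).det = Real.log B⁻¹.det + Real.log W.det := by
    rw [Matrix.det_mul, Real.log_mul hdBi hdW]
  have e4 : Real.log (W⁻¹ * X).det = - Real.log W.det + Real.log X.det := by
    rw [Matrix.det_mul, Real.log_mul hdWi hdX, Matrix.det_nonsing_inv, Ring.inverse_eq_inv, Real.log_inv]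
  have hkey := key_ineq hWpd hXpd
  rw [hBpW]
  linarith [hkey, etr, e2, e3, e4]
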